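/- In horse races with memory effects and side information (finite horse set Y, finite signal set X, fully supported joint distribution P(x^n, y^n), betting fractions f_i(y_i | y^{i−1}, x^i) > 0 summing to 1 over y_i in each race, odds o_i(y_i | y^{i−1}) > 0), the average capital growth rate satisfies ⟨g_n⟩ ≤ (1/n)·⟨Σ_{i=1}^n ln o_i(y_i | y^{i−1})⟩ − (1/n)·S(Y^n) + (1/n)·I_dr(X^n → Y^n), where g_n = (1/n) Σ_i ln[f_i(y_i | y^{i−1}, x^i)·o_i(y_i | y^{i−1})], S(Y^n) = −⟨ln P(y^n)⟩ is the Shannon entropy of the winners, and I_dr(X^n → Y^n) = ⟨ln(P(y^n‖x^n)/P(y^n))⟩ is the directed information. Moreover the bound is attained by the Kelly strategy f_i(y_i | y^{i−1}, x^i) = P(y_i | y^{i−1}, x^i). -/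

import Mathlib

/-- The causally conditioned factor `P(y_i | y^{i-1}, x^i)` of the joint distribution
`P(x^n, y^n)`, evaluated at the pair of sequences `(x, y)`. -/
noncomputable def condY {X Y : Type*} [Fintype X] [Fintype Y] [DecidableEq X]
    [DecidableEq Y] (n : ℕ)
    (P : (Fin n → X) → (Fin n → Y) → ℝ) (i : Fin n)
    (x : Fin n → X) (y : Fin n → Y) : ℝ :=
  (∑ x' : Fin n → X, ∑ y' : Fin n → Y,
      if (∀ j, j ≤ i → x' j = x j) ∧ (∀ j, j ≤ i → y' j = y j) then P x' y' else 0) /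
  (∑ x' : Fin n → X, ∑ y' : Fin n → Y,
      if (∀ j, j ≤ i → x' j = x j) ∧ (∀ j, j < i → y' j = y j) then P x' y' else 0)

namespace Stmt18Aux

open Finset

set_option linter.unusedSectionVars false

variable {X Y : Type*} [Fintype X] [Fintype Y] [DecidableEq X] [DecidableEq Y] {n : ℕ}

/-- The numerator of `condY`. -/
noncomputable def NN (P : (Fin n → X) → (Fin n → Y) → ℝ) (i : Fin n)
    (x : Fin n → X) (y : Fin n → Y) : ℝ :=
  ∑ x' : Fin n → X, ∑ y' : Fin n → Y,
      if (∀ j, j ≤ i → x' j = x j) ∧ (∀ j, j ≤ i → y' j = y j) then P x' y' else 0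

/-- The denominator of `condY`. -/
noncomputable def DD (P : (Fin n → X) → (Fin n → Y) → ℝ) (i : Fin n)
    (x : Fin n → X) (y : Fin n → Y) : ℝ :=
  ∑ x' : Fin n → X, ∑ y' : Fin n → Y,
      if (∀ j, j ≤ i → x' j = x j) ∧ (∀ j, j < i → y' j = y j) then P x' y' else 0

variable {P : (Fin n → X) → (Fin n → Y) → ℝ}

theorem condY_eq (i : Fin n) (x : Fin n → X) (y : Fin n → Y) :
    condY n P i x y = NN P i x y / DD P i x y := rfl

theorem NN_pos (hP : ∀ x y, 0 < P x y) (i : Fin n) (x : Fin n → X) (y : Fin n → Y) :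
    0 < NN P i x y := by
  unfold NN
  have h1 : ∀ (x' : Fin n → X), x' ∈ univ → 0 ≤ ∑ y' : Fin n → Y,
      if (∀ j, j ≤ i → x' j = x j) ∧ (∀ j, j ≤ i → y' j = y j) then P x' y' else 0 := by
    intro x' _
    refine Finset.sum_nonneg fun y' _ => ?_
    split
    · exact (hP _ _).le
    · exact le_rfl
  refine Finset.sum_pos' h1 ⟨x, mem_univ x, ?_⟩
  have h2 : ∀ (y' : Fin n → Y), y' ∈ univ → 0 ≤
      (if (∀ j, j ≤ i → x j = x j) ∧ (∀ j, j ≤ i → y' j = y j) then P x y' else 0) := by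
    intro y' _
    split
    · exact (hP _ _).le
    · exact le_rfl
  refine Finset.sum_pos' h2 ⟨y, mem_univ y, ?_⟩
  simpa using hP x y

theorem DD_pos (hP : ∀ x y, 0 < P x y) (i : Fin n) (x : Fin n → X) (y : Fin n → Y) :
    0 < DD P i x y := by
  unfold DD
  have h1 : ∀ (x' : Fin n → X), x' ∈ univ → 0 ≤ ∑ y' : Fin n → Y,
      if (∀ j, j ≤ i → x' j = x j) ∧ (∀ j, j < i → y' j = y j) then P x' y' else 0 := by
    intro x' _
    refine Finset.sum_nonneg fun y' _ => ?_
    split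
    · exact (hP _ _).le
    · exact le_rfl
  refine Finset.sum_pos' h1 ⟨x, mem_univ x, ?_⟩
  have h2 : ∀ (y' : Fin n → Y), y' ∈ univ → 0 ≤
      (if (∀ j, j ≤ i → x j = x j) ∧ (∀ j, j < i → y' j = y j) then P x y' else 0) := by
    intro y' _
    split
    · exact (hP _ _).le
    · exact le_rfl
  refine Finset.sum_pos' h2 ⟨y, mem_univ y, ?_⟩
  simpa using hP x y

theorem condY_pos (hP : ∀ x y, 0 < P x y) (i : Fin n) (x : Fin n → X) (y : Fin n → Y) :
    0 < condY n P i x y := by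
  rw [condY_eq]
  exact div_pos (NN_pos hP i x y) (DD_pos hP i x y)

theorem DD_causal (i : Fin n) {x x' : Fin n → X} {y y' : Fin n → Y}
    (hx : ∀ j, j ≤ i → x j = x' j) (hy : ∀ j, j < i → y j = y' j) :
    DD P i x y = DD P i x' y' := by
  unfold DD
  refine Finset.sum_congr rfl fun a _ => Finset.sum_congr rfl fun b _ => ?_
  refine if_congr (and_congr ?_ ?_) rfl rfl
  · exact forall_congr' fun j => forall_congr' fun hj => by rw [hx j hj]
  · exact forall_congr' fun j => forall_congr' fun hj => by rw [hy j hj]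

theorem NN_causal (i : Fin n) {x x' : Fin n → X} {y y' : Fin n → Y}
    (hx : ∀ j, j ≤ i → x j = x' j) (hy : ∀ j, j ≤ i → y j = y' j) :
    NN P i x y = NN P i x' y' := by
  unfold NN
  refine Finset.sum_congr rfl fun a _ => Finset.sum_congr rfl fun b _ => ?_
  refine if_congr (and_congr ?_ ?_) rfl rfl
  · exact forall_congr' fun j => forall_congr' fun hj => by rw [hx j hj]
  · exact forall_congr' fun j => forall_congr' fun hj => by rw [hy j hj]

theorem condY_causal (i : Fin n) {x x' : Fin n → X} {y y' : Fin n → Y}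
    (hx : ∀ j, j ≤ i → x j = x' j) (hy : ∀ j, j ≤ i → y j = y' j) :
    condY n P i x y = condY n P i x' y' := by
  rw [condY_eq, condY_eq, NN_causal i hx hy, DD_causal i hx (fun j hj => hy j hj.le)]

theorem update_agree_iff (i : Fin n) (y y' : Fin n → Y) (h : Y) :
    (∀ j, j ≤ i → y' j = Function.update y i h j) ↔
      ((∀ j, j < i → y' j = y j) ∧ y' i = h) := by
  constructor
  · intro H
    refine ⟨fun j hj => ?_, ?_⟩
    · rw [H j hj.le, Function.update_of_ne (Fin.ne_of_lt hj)]
    · rw [H i le_rfl, Function.update_self]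
  · rintro ⟨H1, H2⟩ j hj
    rcases eq_or_lt_of_le hj with rfl | hj
    · rw [H2, Function.update_self]
    · rw [H1 j hj, Function.update_of_ne (Fin.ne_of_lt hj)]

theorem DD_update (i : Fin n) (x : Fin n → X) (y : Fin n → Y) (h : Y) :
    DD P i x (Function.update y i h) = DD P i x y :=
  DD_causal i (fun _ _ => rfl)
    (fun j hj => (Function.update_of_ne (Fin.ne_of_lt hj) _ _).symm) |>.symm

theorem sum_NN_update (i : Fin n) (x : Fin n → X) (y : Fin n → Y) :
    ∑ h : Y, NN P i x (Function.update y i h) = DD P i x y := by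
  unfold NN DD
  rw [Finset.sum_comm]
  refine Finset.sum_congr rfl fun x' _ => ?_
  rw [Finset.sum_comm]
  refine Finset.sum_congr rfl fun y' _ => ?_
  have key : ∀ h : Y, ((∀ j, j ≤ i → x' j = x j) ∧ (∀ j, j ≤ i → y' j = Function.update y i h j))
      ↔ (((∀ j, j ≤ i → x' j = x j) ∧ (∀ j, j < i → y' j = y j)) ∧ h = y' i) := by
    intro h
    rw [update_agree_iff, eq_comm (a := y' i)]
    tauto
  simp only [key, ite_and]
  by_cases hA : (∀ j, j ≤ i → x' j = x j) <;>
    by_cases hB : (∀ j, j < i → y' j = y j) <;> simp [hA, hB]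

/-- The tower property for the conditional distribution `condY`. -/
theorem tower (hP : ∀ x y, 0 < P x y) (i : Fin n)
    (φ : (Fin n → X) → (Fin n → Y) → ℝ)
    (hφ : ∀ (x x' : Fin n → X) (y y' : Fin n → Y),
      (∀ j, j ≤ i → x j = x' j) → (∀ j, j ≤ i → y j = y' j) → φ x y = φ x' y') :
    ∑ x, ∑ y, P x y * ∑ h : Y,
      (NN P i x (Function.update y i h) / DD P i x y) * φ x (Function.update y i h)
    = ∑ x, ∑ y, P x y * φ x y := by
  have hstep : ∀ (x : Fin n → X) (y : Fin n → Y),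
      P x y * ∑ h : Y, (NN P i x (Function.update y i h) / DD P i x y)
        * φ x (Function.update y i h)
      = ∑ h : Y, ∑ q : (Fin n → X) × (Fin n → Y),
          if (∀ j, j ≤ i → q.1 j = x j) ∧ (∀ j, j ≤ i → q.2 j = Function.update y i h j)
          then P x y * (P q.1 q.2 * φ q.1 q.2 / DD P i q.1 q.2) else 0 := by
    intro x y
    rw [Finset.mul_sum]
    refine Finset.sum_congr rfl fun h _ => ?_
    have hNN : NN P i x (Function.update y i h)
        = ∑ q : (Fin n → X) × (Fin n → Y),
          if (∀ j, j ≤ i → q.1 j = x j) ∧ (∀ j, j ≤ i → q.2 j = Function.update y i h j)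
          then P q.1 q.2 else 0 := by
      rw [NN]
      exact (Fintype.sum_prod_type (f := fun q : (Fin n → X) × (Fin n → Y) =>
        if (∀ j, j ≤ i → q.1 j = x j) ∧ (∀ j, j ≤ i → q.2 j = Function.update y i h j)
        then P q.1 q.2 else 0)).symm
    rw [hNN, Finset.sum_div, Finset.sum_mul, Finset.mul_sum]
    refine Finset.sum_congr rfl fun q _ => ?_
    by_cases hc : (∀ j, j ≤ i → q.1 j = x j) ∧ (∀ j, j ≤ i → q.2 j = Function.update y i h j)
    · rw [if_pos hc, if_pos hc]
      have hDD : DD P i x y = DD P i q.1 q.2 := by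
        have h1 : DD P i x y = DD P i x (Function.update y i h) :=
          (DD_causal i (fun _ _ => rfl)
            (fun j hj => (Function.update_of_ne (Fin.ne_of_lt hj) _ _).symm))
        rw [h1]
        exact DD_causal i (fun j hj => (hc.1 j hj).symm)
          (fun j hj => (hc.2 j hj.le).symm)
      have hphi : φ x (Function.update y i h) = φ q.1 q.2 :=
        hφ _ _ _ _ (fun j hj => (hc.1 j hj).symm) (fun j hj => (hc.2 j hj).symm)
      rw [hDD, hphi]; ring
    · rw [if_neg hc, if_neg hc]; simp
  calc ∑ x, ∑ y, P x y * ∑ h : Y,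
        (NN P i x (Function.update y i h) / DD P i x y) * φ x (Function.update y i h)
      = ∑ p : (Fin n → X) × (Fin n → Y), ∑ h : Y, ∑ q : (Fin n → X) × (Fin n → Y),
          if (∀ j, j ≤ i → q.1 j = p.1 j) ∧ (∀ j, j ≤ i → q.2 j = Function.update p.2 i h j)
          then P p.1 p.2 * (P q.1 q.2 * φ q.1 q.2 / DD P i q.1 q.2) else 0 := by
        rw [Fintype.sum_prod_type]
        exact Finset.sum_congr rfl fun x _ => Finset.sum_congr rfl fun y _ => hstep x y
    _ = ∑ q : (Fin n → X) × (Fin n → Y),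
          (P q.1 q.2 * φ q.1 q.2 / DD P i q.1 q.2) *
          ∑ p : (Fin n → X) × (Fin n → Y), ∑ h : Y,
          (if (∀ j, j ≤ i → q.1 j = p.1 j) ∧ (∀ j, j ≤ i → q.2 j = Function.update p.2 i h j)
          then P p.1 p.2 else 0) := by
        rw [show (∑ p : (Fin n → X) × (Fin n → Y), ∑ h : Y, ∑ q : (Fin n → X) × (Fin n → Y),
          if (∀ j, j ≤ i → q.1 j = p.1 j) ∧ (∀ j, j ≤ i → q.2 j = Function.update p.2 i h j)
          then P p.1 p.2 * (P q.1 q.2 * φ q.1 q.2 / DD P i q.1 q.2) else 0)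
          = ∑ p : (Fin n → X) × (Fin n → Y), ∑ q : (Fin n → X) × (Fin n → Y), ∑ h : Y,
          (if (∀ j, j ≤ i → q.1 j = p.1 j) ∧ (∀ j, j ≤ i → q.2 j = Function.update p.2 i h j)
          then P p.1 p.2 * (P q.1 q.2 * φ q.1 q.2 / DD P i q.1 q.2) else 0)
          from Finset.sum_congr rfl fun p _ => Finset.sum_comm]
        rw [Finset.sum_comm]
        refine Finset.sum_congr rfl fun q _ => ?_
        rw [Finset.mul_sum]
        refine Finset.sum_congr rfl fun p _ => ?_
        rw [Finset.mul_sum]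
        refine Finset.sum_congr rfl fun h _ => ?_
        rw [mul_ite, mul_zero]
        split <;> ring
    _ = ∑ q : (Fin n → X) × (Fin n → Y),
          (P q.1 q.2 * φ q.1 q.2 / DD P i q.1 q.2) * DD P i q.1 q.2 := by
        refine Finset.sum_congr rfl fun q _ => ?_
        congr 1
        have hDDq : DD P i q.1 q.2 = ∑ p : (Fin n → X) × (Fin n → Y),
            if (∀ j, j ≤ i → p.1 j = q.1 j) ∧ (∀ j, j < i → p.2 j = q.2 j)
            then P p.1 p.2 else 0 := by
          rw [DD]
          exact (Fintype.sum_prod_type (f := fun p : (Fin n → X) × (Fin n → Y) =>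
            if (∀ j, j ≤ i → p.1 j = q.1 j) ∧ (∀ j, j < i → p.2 j = q.2 j)
            then P p.1 p.2 else 0)).symm
        rw [hDDq]
        refine Finset.sum_congr rfl fun p _ => ?_
        have key : ∀ h : Y,
            ((∀ j, j ≤ i → q.1 j = p.1 j) ∧ (∀ j, j ≤ i → q.2 j = Function.update p.2 i h j))
            ↔ (((∀ j, j ≤ i → p.1 j = q.1 j) ∧ (∀ j, j < i → p.2 j = q.2 j)) ∧ h = q.2 i) := by
          intro h
          rw [update_agree_iff i p.2 q.2 h, eq_comm (a := q.2 i)]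
          constructor
          · rintro ⟨h1, h2, h3⟩
            exact ⟨⟨fun j hj => (h1 j hj).symm, fun j hj => (h2 j hj).symm⟩, h3⟩
          · rintro ⟨⟨h1, h2⟩, h3⟩
            exact ⟨fun j hj => (h1 j hj).symm, fun j hj => (h2 j hj).symm, h3⟩
        simp only [key, ite_and]
        by_cases hA : (∀ j, j ≤ i → p.1 j = q.1 j) <;>
          by_cases hB : (∀ j, j < i → p.2 j = q.2 j) <;> simp [hA, hB]
    _ = ∑ x, ∑ y, P x y * φ x y := by
        rw [Fintype.sum_prod_type]
        refine Finset.sum_congr rfl fun a _ => Finset.sum_congr rfl fun b _ => ?_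
        exact div_mul_cancel₀ _ (DD_pos hP i a b).ne'

/-- The conditional Gibbs inequality: in race `i`, the expected log of the betting
fraction is maximized by the conditional distribution. -/
theorem step (hP : ∀ x y, 0 < P x y) (i : Fin n)
    (f : Fin n → (Fin n → X) → (Fin n → Y) → ℝ)
    (hfpos : ∀ i x y, 0 < f i x y)
    (hfcausal : ∀ (i : Fin n) (x x' : Fin n → X) (y y' : Fin n → Y),
      (∀ j, j ≤ i → x j = x' j) → (∀ j, j ≤ i → y j = y' j) → f i x y = f i x' y')
    (hfsum : ∀ (i : Fin n) (x : Fin n → X) (y : Fin n → Y),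
      ∑ h : Y, f i x (Function.update y i h) = 1) :
    ∑ x, ∑ y, P x y * (Real.log (f i x y) - Real.log (condY n P i x y)) ≤ 0 := by
  set φ : (Fin n → X) → (Fin n → Y) → ℝ :=
    fun x y => Real.log (f i x y) - Real.log (condY n P i x y) with hφdef
  have hφ : ∀ (x x' : Fin n → X) (y y' : Fin n → Y),
      (∀ j, j ≤ i → x j = x' j) → (∀ j, j ≤ i → y j = y' j) → φ x y = φ x' y' := by
    intro x x' y y' hx hy
    simp only [hφdef]
    rw [hfcausal i x x' y y' hx hy, condY_causal i hx hy]
  rw [← tower hP i φ hφ]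
  have key : ∀ (x : Fin n → X) (y : Fin n → Y),
      (∑ h : Y, (NN P i x (Function.update y i h) / DD P i x y)
        * φ x (Function.update y i h)) ≤ 0 := by
    intro x y
    have hle : ∀ h : Y, (NN P i x (Function.update y i h) / DD P i x y)
        * φ x (Function.update y i h)
        ≤ f i x (Function.update y i h) - NN P i x (Function.update y i h) / DD P i x y := by
      intro h
      set c : ℝ := NN P i x (Function.update y i h) / DD P i x y with hc
      have hcpos : 0 < c := div_pos (NN_pos hP i x _) (DD_pos hP i x y)
      have hcond : condY n P i x (Function.update y i h) = c := by
        rw [condY_eq, DD_update, hc]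
      have hfp : 0 < f i x (Function.update y i h) := hfpos i x _
      have : φ x (Function.update y i h) = Real.log (f i x (Function.update y i h) / c) := by
        simp only [hφdef, hcond]
        rw [Real.log_div hfp.ne' hcpos.ne']
      rw [this]
      calc c * Real.log (f i x (Function.update y i h) / c)
          ≤ c * (f i x (Function.update y i h) / c - 1) :=
            mul_le_mul_of_nonneg_left
              (Real.log_le_sub_one_of_pos (div_pos hfp hcpos)) hcpos.le
        _ = f i x (Function.update y i h) - c := by
            field_simp
    calc (∑ h : Y, (NN P i x (Function.update y i h) / DD P i x y)
          * φ x (Function.update y i h))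
        ≤ ∑ h : Y, (f i x (Function.update y i h)
            - NN P i x (Function.update y i h) / DD P i x y) :=
          Finset.sum_le_sum fun h _ => hle h
      _ = 0 := by
          rw [Finset.sum_sub_distrib, hfsum i x y, ← Finset.sum_div, sum_NN_update,
            div_self (DD_pos hP i x y).ne']
          ring
  refine Finset.sum_nonpos fun x _ => Finset.sum_nonpos fun y _ => ?_
  exact mul_nonpos_of_nonneg_of_nonpos (hP x y).le (key x y)

end Stmt18Aux

/-- In horse races with memory effects and side information, the average capital
growth rate is bounded by
`(1/n)·⟨Σ_i ln o_i⟩ - (1/n)·S(Y^n) + (1/n)·I_dr(X^n → Y^n)`, and the bound is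
attained by the Kelly strategy `f_i(y_i | y^{i-1}, x^i) = P(y_i | y^{i-1}, x^i)`. -/
theorem stmt18 {X Y : Type*} [Fintype X] [Fintype Y] [DecidableEq X] [DecidableEq Y]
    (n : ℕ) (hn : 0 < n)
    (P : (Fin n → X) → (Fin n → Y) → ℝ)
    (hP : ∀ x y, 0 < P x y) (hPsum : ∑ x, ∑ y, P x y = 1)
    (f : Fin n → (Fin n → X) → (Fin n → Y) → ℝ)
    (hfpos : ∀ i x y, 0 < f i x y)
    (hfcausal : ∀ (i : Fin n) (x x' : Fin n → X) (y y' : Fin n → Y),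
      (∀ j, j ≤ i → x j = x' j) → (∀ j, j ≤ i → y j = y' j) → f i x y = f i x' y')
    (hfsum : ∀ (i : Fin n) (x : Fin n → X) (y : Fin n → Y),
      ∑ h : Y, f i x (Function.update y i h) = 1)
    (o : Fin n → (Fin n → Y) → ℝ)
    (hopos : ∀ i y, 0 < o i y)
    (hocausal : ∀ (i : Fin n) (y y' : Fin n → Y),
      (∀ j, j ≤ i → y j = y' j) → o i y = o i y') :
    (∑ x, ∑ y, P x y * ((1 / (n : ℝ)) * ∑ i, Real.log (f i x y * o i y))
      ≤ (1 / (n : ℝ)) * (∑ x, ∑ y, P x y * ∑ i, Real.log (o i y))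
        - (1 / (n : ℝ)) * (-(∑ y, (∑ x, P x y) * Real.log (∑ x, P x y)))
        + (1 / (n : ℝ)) * (∑ x, ∑ y, P x y *
            Real.log ((∏ i, condY n P i x y) / (∑ x', P x' y))))
    ∧ (∑ x, ∑ y, P x y * ((1 / (n : ℝ)) * ∑ i, Real.log (condY n P i x y * o i y))
      = (1 / (n : ℝ)) * (∑ x, ∑ y, P x y * ∑ i, Real.log (o i y))
        - (1 / (n : ℝ)) * (-(∑ y, (∑ x, P x y) * Real.log (∑ x, P x y)))
        + (1 / (n : ℝ)) * (∑ x, ∑ y, P x y *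
            Real.log ((∏ i, condY n P i x y) / (∑ x', P x' y)))) := by
  have hcpos : ∀ (i : Fin n) (x : Fin n → X) (y : Fin n → Y), 0 < condY n P i x y :=
    fun i x y => Stmt18Aux.condY_pos hP i x y
  -- X is nonempty
  have hneX : Nonempty X := by
    by_contra h
    rw [not_nonempty_iff] at h
    haveI : IsEmpty (Fin n → X) := ⟨fun g => h.false (g ⟨0, hn⟩)⟩
    rw [Finset.univ_eq_empty, Finset.sum_empty] at hPsum
    norm_num at hPsum
  have hPY : ∀ y : Fin n → Y, 0 < ∑ x, P x y :=
    fun y => Finset.sum_pos (fun x _ => hP x y) Finset.univ_nonempty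
  -- expansion of the capital growth rate
  have expand : ∀ (g : Fin n → (Fin n → X) → (Fin n → Y) → ℝ), (∀ i x y, 0 < g i x y) →
      ∑ x, ∑ y, P x y * ((1 / (n : ℝ)) * ∑ i, Real.log (g i x y * o i y))
      = (1 / (n : ℝ)) * ((∑ x, ∑ y, P x y * ∑ i, Real.log (g i x y))
          + ∑ x, ∑ y, P x y * ∑ i, Real.log (o i y)) := by
    intro g hg
    have h1 : ∀ (x : Fin n → X) (y : Fin n → Y),
        P x y * ((1 / (n : ℝ)) * ∑ i, Real.log (g i x y * o i y))
        = (1 / (n : ℝ)) * (P x y * ∑ i, Real.log (g i x y))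
          + (1 / (n : ℝ)) * (P x y * ∑ i, Real.log (o i y)) := by
      intro x y
      have h2 : ∑ i, Real.log (g i x y * o i y)
          = (∑ i, Real.log (g i x y)) + ∑ i, Real.log (o i y) := by
        rw [← Finset.sum_add_distrib]
        exact Finset.sum_congr rfl fun i _ =>
          Real.log_mul (hg i x y).ne' (hopos i y).ne'
      rw [h2]; ring
    simp only [h1, Finset.sum_add_distrib, ← Finset.mul_sum]
    ring
  -- rewriting the directed-information term
  have hRHSC : ∑ x, ∑ y, P x y * Real.log ((∏ i, condY n P i x y) / (∑ x', P x' y))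
      = (∑ x, ∑ y, P x y * ∑ i, Real.log (condY n P i x y))
        - ∑ x, ∑ y, P x y * Real.log (∑ x', P x' y) := by
    have h1 : ∀ (x : Fin n → X) (y : Fin n → Y),
        P x y * Real.log ((∏ i, condY n P i x y) / (∑ x', P x' y))
        = P x y * ∑ i, Real.log (condY n P i x y)
          - P x y * Real.log (∑ x', P x' y) := by
      intro x y
      rw [Real.log_div (Finset.prod_pos fun i _ => hcpos i x y).ne' (hPY y).ne',
        Real.log_prod (fun i _ => (hcpos i x y).ne'), mul_sub]
    simp only [h1, Finset.sum_sub_distrib]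
  -- rewriting the entropy term
  have hB : ∑ y, (∑ x, P x y) * Real.log (∑ x, P x y)
      = ∑ x, ∑ y, P x y * Real.log (∑ x', P x' y) := by
    calc ∑ y, (∑ x, P x y) * Real.log (∑ x, P x y)
        = ∑ y, ∑ x, P x y * Real.log (∑ x', P x' y) :=
          Finset.sum_congr rfl fun y _ => Finset.sum_mul _ _ _
      _ = ∑ x, ∑ y, P x y * Real.log (∑ x', P x' y) := Finset.sum_comm
  -- the right-hand side equals `(1/n) * (Lc + A)`
  have hRHS : (1 / (n : ℝ)) * (∑ x, ∑ y, P x y * ∑ i, Real.log (o i y))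
        - (1 / (n : ℝ)) * (-(∑ y, (∑ x, P x y) * Real.log (∑ x, P x y)))
        + (1 / (n : ℝ)) * (∑ x, ∑ y, P x y *
            Real.log ((∏ i, condY n P i x y) / (∑ x', P x' y)))
      = (1 / (n : ℝ)) * ((∑ x, ∑ y, P x y * ∑ i, Real.log (condY n P i x y))
          + ∑ x, ∑ y, P x y * ∑ i, Real.log (o i y)) := by
    rw [hRHSC, hB]; ring
  -- swapping sums
  have swap : ∀ (a : Fin n → (Fin n → X) → (Fin n → Y) → ℝ),
      ∑ x, ∑ y, P x y * ∑ i, a i x y = ∑ i, ∑ x, ∑ y, P x y * a i x y := by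
    intro a
    simp only [Finset.mul_sum]
    calc ∑ x, ∑ y, ∑ i, P x y * a i x y
        = ∑ x, ∑ i, ∑ y, P x y * a i x y :=
          Finset.sum_congr rfl fun x _ => Finset.sum_comm
      _ = ∑ i, ∑ x, ∑ y, P x y * a i x y := Finset.sum_comm
  -- the main inequality on the strategy terms
  have hineq : (∑ x, ∑ y, P x y * ∑ i, Real.log (f i x y))
      ≤ ∑ x, ∑ y, P x y * ∑ i, Real.log (condY n P i x y) := by
    rw [swap (fun i x y => Real.log (f i x y)),
      swap (fun i x y => Real.log (condY n P i x y))]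
    refine Finset.sum_le_sum fun i _ => ?_
    have hstep := Stmt18Aux.step hP i f hfpos hfcausal hfsum
    have hsplit : ∑ x, ∑ y, P x y * (Real.log (f i x y) - Real.log (condY n P i x y))
        = (∑ x, ∑ y, P x y * Real.log (f i x y))
          - ∑ x, ∑ y, P x y * Real.log (condY n P i x y) := by
      simp only [mul_sub, Finset.sum_sub_distrib]
    rw [hsplit] at hstep
    linarith
  constructor
  · rw [expand f hfpos, hRHS]
    have hn' : (0:ℝ) ≤ 1 / n := by positivity
    exact mul_le_mul_of_nonneg_left (add_le_add_left hineq _) hn'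
  · rw [expand (fun i x y => condY n P i x y) hcpos, hRHS]
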